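/- Let Γ be a group acting by homeomorphisms on two nonempty compact Hausdorff spaces Y and X, and suppose both actions are minimal. Let π : Y → X be a continuous Γ-equivariant map. Then for every subset U ⊆ Y with nonempty interior, the image π(U) has nonempty interior in X. (Lemma 3.2, a continuous equivariant map between minimal compact Γ-spaces sends sets of nonempty interior to sets of nonempty interior.) -/

import Mathlib

open Pointwise

/-- Lemma 3.2: a continuous equivariant map between minimal compact Γ-spaces sends sets of
nonempty interior to sets of nonempty interior. -/
theorem image_nonempty_interior_of_minimal
    {G Y X : Type*} [Group G]
    [TopologicalSpace Y] [CompactSpace Y] [T2Space Y] [Nonempty Y]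
    [MulAction G Y] [ContinuousConstSMul G Y]
    [TopologicalSpace X] [CompactSpace X] [T2Space X] [Nonempty X]
    [MulAction G X] [ContinuousConstSMul G X]
    (hminY : ∀ C : Set Y, IsClosed C → (∀ g : G, ∀ y ∈ C, g • y ∈ C) →
      C = ∅ ∨ C = Set.univ)
    (hminX : ∀ C : Set X, IsClosed C → (∀ g : G, ∀ x ∈ C, g • x ∈ C) →
      C = ∅ ∨ C = Set.univ)
    (π : Y → X) (hcont : Continuous π) (hequiv : ∀ (g : G) (y : Y), π (g • y) = g • π y)
    (U : Set Y) (hU : (interior U).Nonempty) :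
    (interior (π '' U)).Nonempty := by
  obtain ⟨y0, hy0⟩ := hU
  -- find a closed set t with nonempty interior, t ⊆ interior U
  obtain ⟨t, ht_nhds, ht_closed, ht_sub⟩ :=
    exists_mem_nhds_isClosed_subset (isOpen_interior.mem_nhds hy0)
  set W := interior t with hW
  have hy0W : y0 ∈ W := mem_interior_iff_mem_nhds.2 ht_nhds
  -- π is surjective
  have hsurj : Set.range π = Set.univ := by
    rcases hminX (Set.range π) (isCompact_range hcont).isClosed
      (by rintro g x ⟨y, rfl⟩; exact ⟨g • y, hequiv g y⟩) with h | h
    · exact absurd h (by simp [Set.range_eq_empty_iff, ← not_nonempty_iff, ‹Nonempty Y›])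
    · exact h
  -- translates of W cover Y
  have hcover : (Set.univ : Set Y) ⊆ ⋃ g : G, g • W := by
    have := hminY (⋃ g : G, g • W)ᶜ
      (isClosed_compl_iff.2 (isOpen_iUnion fun g => isOpen_interior.smul g))
      (by
        intro g y hy
        simp only [Set.mem_compl_iff, Set.mem_iUnion, not_exists] at hy ⊢
        intro h hmem
        refine hy (g⁻¹ * h) ?_
        rw [Set.mem_smul_set_iff_inv_smul_mem] at hmem ⊢
        simpa [mul_smul] using hmem)
    rcases this with h | h
    · rw [Set.compl_empty_iff] at h; exact h.symm.subset
    · exfalso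
      have : y0 ∈ (⋃ g : G, g • W)ᶜ := h ▸ Set.mem_univ y0
      exact this (Set.mem_iUnion.2 ⟨1, by simpa using hy0W⟩)
  -- finite subcover
  obtain ⟨s, hs⟩ := isCompact_univ.elim_finite_subcover (fun g : G => g • W)
    (fun g => isOpen_interior.smul g) hcover
  -- s is nonempty
  have hsne : s.Nonempty := by
    by_contra h
    rw [Finset.not_nonempty_iff_eq_empty] at h
    simpa [h] using hs (Set.mem_univ y0)
  -- the closed sets g • (π '' t), g ∈ s, cover X
  have hKcomp : IsCompact (π '' t) :=
    (ht_closed.isCompact).image hcont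
  have hXcover : (Set.univ : Set X) ⊆ ⋃ g ∈ s, g • (π '' t) := by
    intro x _
    obtain ⟨y, rfl⟩ : x ∈ Set.range π := hsurj ▸ Set.mem_univ x
    obtain ⟨g, hg, hyg⟩ := by simpa using hs (Set.mem_univ y)
    refine Set.mem_biUnion hg ?_
    rw [Set.mem_smul_set_iff_inv_smul_mem] at hyg ⊢
    rw [← hequiv]
    exact Set.mem_image_of_mem π (interior_subset hyg)
  -- Baire-type argument: one of the finitely many closed sets has nonempty interior
  have : ∃ g : s, (interior ((g : G) • (π '' t))).Nonempty := by
    apply nonempty_interior_of_iUnion_of_closed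
      (f := fun g : s => (g : G) • (π '' t))
      (fun g => hKcomp.isClosed.smul _)
    rw [Set.eq_univ_iff_forall]
    intro x
    obtain ⟨g, hg, hx⟩ := by simpa using hXcover (Set.mem_univ x)
    exact Set.mem_iUnion.2 ⟨⟨g, hg⟩, hx⟩
  obtain ⟨g, hg⟩ := this
  rw [interior_smul] at hg
  obtain ⟨x, hx⟩ := hg
  rw [Set.mem_smul_set_iff_inv_smul_mem] at hx
  exact ⟨_, interior_mono (Set.image_mono (f := π) (ht_sub.trans interior_subset)) hx⟩
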